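/- Let n ≥ 4 and 0 < α < log_{n−2}((2n−4)/(n−1)). Then among all trees on n vertices, the star S_n is the unique minimizer of σ_t^α, and the path P_n attains the second smallest value of σ_t^α. -/

import Mathlib

open Finset

/-- The degree of a vertex: the number of its neighbors. -/
noncomputable def deg {n : ℕ} (G : SimpleGraph (Fin n)) (v : Fin n) : ℕ :=
  Nat.card {u | G.Adj v u}

/-- `σ_t^α(G) = Σ_{{u,v}⊆V(G)} |d(u)−d(v)|^α`, summed over unordered pairs of
distinct vertices. -/
noncomputable def sigmaT {n : ℕ} (G : SimpleGraph (Fin n)) (α : ℝ) : ℝ :=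
  ∑ i : Fin n, ∑ j ∈ Finset.Ioi i, |((deg G i : ℝ)) - (deg G j : ℝ)| ^ α

/-- The star on `n` vertices: vertex `0` is adjacent to all other vertices. -/
def starGraph (n : ℕ) : SimpleGraph (Fin n) where
  Adj i j := i ≠ j ∧ ((i : ℕ) = 0 ∨ (j : ℕ) = 0)
  symm := by
    constructor
    intro i j ⟨h1, h2⟩
    exact ⟨h1.symm, h2.symm⟩
  loopless := by
    constructor
    intro i ⟨h, _⟩
    exact h rfl

lemma deg_eq_degree {n : ℕ} (G : SimpleGraph (Fin n)) [DecidableRel G.Adj] (v : Fin n) :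
    deg G v = G.degree v := by
  classical
  unfold deg
  rw [Nat.card_coe_set_eq, Set.ncard_eq_toFinset_card']
  have : {u | G.Adj v u}.toFinset = G.neighborFinset v := by
    ext u
    simp [SimpleGraph.mem_neighborFinset]
  rw [this]
  rfl

lemma nat_card_set_eq_card_filter {n : ℕ} (p : Fin n → Prop) [DecidablePred p] :
    Nat.card {u | p u} = (univ.filter p).card := by
  classical
  rw [Nat.card_coe_set_eq, Set.ncard_eq_toFinset_card']
  congr 1
  ext u
  simp

lemma deg_star {n : ℕ} (hn : 4 ≤ n) (i : Fin n) :
    deg (starGraph n) i = if (i : ℕ) = 0 then n - 1 else 1 := by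
  classical
  unfold deg
  have hz : (0 : ℕ) < n := by omega
  by_cases hi : (i : ℕ) = 0
  · have hset : {u | (starGraph n).Adj i u} = {u : Fin n | u ≠ i} := by
      ext u
      simp only [starGraph, Set.mem_setOf_eq]
      constructor
      · rintro ⟨h1, _⟩; exact fun h => h1 h.symm
      · intro h; exact ⟨fun hh => h hh.symm, Or.inl hi⟩
    rw [hset, nat_card_set_eq_card_filter, Finset.filter_ne', if_pos hi]
    simp [Finset.card_erase_of_mem]
  · have hset : {u | (starGraph n).Adj i u} = {(⟨0, hz⟩ : Fin n)} := by
      ext u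
      simp only [starGraph, Set.mem_setOf_eq, Set.mem_singleton_iff]
      constructor
      · rintro ⟨h1, h2 | h2⟩
        · exact absurd h2 hi
        · exact Fin.ext h2
      · rintro rfl
        exact ⟨fun hh => hi (by rw [hh]), Or.inr rfl⟩
    rw [hset, Nat.card_coe_set_eq, Set.ncard_singleton, if_neg hi]

lemma deg_path {n : ℕ} (hn : 4 ≤ n) (i : Fin n) :
    deg (SimpleGraph.pathGraph n) i = if (i : ℕ) = 0 ∨ (i : ℕ) = n - 1 then 1 else 2 := by
  classical
  unfold deg
  have hadj : ∀ u : Fin n, (SimpleGraph.pathGraph n).Adj i u ↔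
      ((i : ℕ) + 1 = u ∨ (u : ℕ) + 1 = i) := fun u => SimpleGraph.pathGraph_adj
  by_cases h0 : (i : ℕ) = 0
  · have hset : {u | (SimpleGraph.pathGraph n).Adj i u} = {(⟨1, by omega⟩ : Fin n)} := by
      ext u
      simp only [Set.mem_setOf_eq, hadj, Set.mem_singleton_iff, Fin.ext_iff]
      omega
    rw [hset, Nat.card_coe_set_eq, Set.ncard_singleton]
    simp [h0]
  · by_cases h1 : (i : ℕ) = n - 1
    · have hset : {u | (SimpleGraph.pathGraph n).Adj i u} = {(⟨n - 2, by omega⟩ : Fin n)} := by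
        ext u
        simp only [Set.mem_setOf_eq, hadj, Set.mem_singleton_iff, Fin.ext_iff]
        have := u.isLt
        omega
      rw [hset, Nat.card_coe_set_eq, Set.ncard_singleton]
      simp [h1]
    · have hilt := i.isLt
      have hset : {u | (SimpleGraph.pathGraph n).Adj i u} =
          {(⟨(i : ℕ) + 1, by omega⟩ : Fin n), (⟨(i : ℕ) - 1, by omega⟩ : Fin n)} := by
        ext u
        simp only [Set.mem_setOf_eq, hadj, Set.mem_insert_iff, Set.mem_singleton_iff,
          Fin.ext_iff]
        omega
      rw [hset, Nat.card_coe_set_eq,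
        Set.ncard_pair (by simp only [ne_eq, Fin.ext_iff]; omega)]
      simp [h0, h1]

lemma sigma_star {n : ℕ} (hn : 4 ≤ n) (α : ℝ) (hα0 : 0 < α) :
    sigmaT (starGraph n) α = ((n : ℝ) - 1) * ((n : ℝ) - 2) ^ α := by
  classical
  unfold sigmaT
  set z : Fin n := ⟨0, by omega⟩ with hz
  have hterm : ∀ i : Fin n, ∑ j ∈ Finset.Ioi i, |((deg (starGraph n) i : ℝ)) -
      (deg (starGraph n) j : ℝ)| ^ α = if i = z then ((Ioi z).card : ℝ) * ((n : ℝ) - 2) ^ α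
      else 0 := by
    intro i
    by_cases hi : i = z
    · subst hi
      rw [if_pos rfl]
      have hcongr : ∀ j ∈ Ioi z, |((deg (starGraph n) z : ℝ)) -
          (deg (starGraph n) j : ℝ)| ^ α = ((n : ℝ) - 2) ^ α := by
        intro j hj
        have hjz : (z : ℕ) < (j : ℕ) := Fin.lt_def.mp (Finset.mem_Ioi.mp hj)
        have hj0 : (j : ℕ) ≠ 0 := by simp only [hz] at hjz; omega
        rw [deg_star hn, deg_star hn, if_pos rfl, if_neg hj0]
        have hcast : ((n - 1 : ℕ) : ℝ) - ((1 : ℕ) : ℝ) = (n : ℝ) - 2 := by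
          rw [Nat.cast_sub (by omega : 1 ≤ n)]
          push_cast; ring
        rw [hcast, abs_of_nonneg (by
          have : (4 : ℝ) ≤ (n : ℝ) := by exact_mod_cast hn
          linarith)]
      rw [Finset.sum_congr rfl hcongr, Finset.sum_const, nsmul_eq_mul]
    · rw [if_neg hi]
      apply Finset.sum_eq_zero
      intro j hj
      have hij : (i : ℕ) < (j : ℕ) := Fin.lt_def.mp (Finset.mem_Ioi.mp hj)
      have hi0 : (i : ℕ) ≠ 0 := fun h => hi (Fin.ext h)
      have hj0 : (j : ℕ) ≠ 0 := by omega
      rw [deg_star hn, deg_star hn, if_neg hi0, if_neg hj0]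
      simp [Real.zero_rpow hα0.ne']
  rw [Finset.sum_congr rfl (fun i _ => hterm i), Finset.sum_ite_eq' univ z,
    if_pos (Finset.mem_univ z)]
  have hcard : (Ioi z).card = n - 1 := by
    rw [Fin.card_Ioi]; simp [hz]
  rw [hcard]
  rw [Nat.cast_sub (by omega : 1 ≤ n)]
  push_cast; ring

lemma sigma_path {n : ℕ} (hn : 4 ≤ n) (α : ℝ) (hα0 : 0 < α) :
    sigmaT (SimpleGraph.pathGraph n) α = 2 * (n : ℝ) - 4 := by
  classical
  unfold sigmaT
  set z : Fin n := ⟨0, by omega⟩ with hz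
  set w : Fin n := ⟨n - 1, by omega⟩ with hw
  have hzw : z ≠ w := by
    simp only [hz, hw, ne_eq, Fin.ext_iff]
    omega
  have hterm : ∀ i : Fin n, ∑ j ∈ Finset.Ioi i, |((deg (SimpleGraph.pathGraph n) i : ℝ)) -
      (deg (SimpleGraph.pathGraph n) j : ℝ)| ^ α =
      if i = z then ((n : ℝ) - 2) else (if i < w then 1 else 0) := by
    intro i
    by_cases hi : i = z
    · subst hi
      rw [if_pos rfl]
      have hcongr : ∀ j ∈ Ioi z, |((deg (SimpleGraph.pathGraph n) z : ℝ)) -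
          (deg (SimpleGraph.pathGraph n) j : ℝ)| ^ α = 1 - (if j = w then 1 else 0) := by
        intro j hj
        have hjz : (z : ℕ) < (j : ℕ) := Fin.lt_def.mp (Finset.mem_Ioi.mp hj)
        have hj0 : (j : ℕ) ≠ 0 := by simp only [hz] at hjz; omega
        rw [deg_path hn, deg_path hn, if_pos (Or.inl rfl)]
        by_cases hjw : j = w
        · rw [if_pos (by subst hjw; right; rfl), if_pos hjw]
          simp [Real.zero_rpow hα0.ne']
        · have hjn : (j : ℕ) ≠ n - 1 := fun h => hjw (Fin.ext h)
          rw [if_neg (by push_neg; exact ⟨hj0, hjn⟩), if_neg hjw]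
          norm_num
      rw [Finset.sum_congr rfl hcongr, Finset.sum_sub_distrib, Finset.sum_const,
        Finset.sum_ite_eq' (Ioi z) w]
      have hwz : w ∈ Ioi z := by
        rw [Finset.mem_Ioi]
        exact lt_of_le_of_ne (by simp [hz, Fin.le_def]) hzw
      rw [if_pos hwz]
      have hc : (Ioi z).card = n - 1 := by rw [Fin.card_Ioi]; simp [hz]
      rw [hc, nsmul_eq_mul, mul_one, Nat.cast_sub (by omega : 1 ≤ n)]
      push_cast; ring
    · rw [if_neg hi]
      by_cases hiw : i < w
      · rw [if_pos hiw]
        have hi0 : (i : ℕ) ≠ 0 := fun h => hi (Fin.ext h)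
        have hin : (i : ℕ) ≠ n - 1 := fun h => absurd (Fin.ext h : i = w) (ne_of_lt hiw)
        have hcongr : ∀ j ∈ Ioi i, |((deg (SimpleGraph.pathGraph n) i : ℝ)) -
            (deg (SimpleGraph.pathGraph n) j : ℝ)| ^ α = (if j = w then 1 else 0) := by
          intro j hj
          have hij : (i : ℕ) < (j : ℕ) := Fin.lt_def.mp (Finset.mem_Ioi.mp hj)
          have hj0 : (j : ℕ) ≠ 0 := by omega
          rw [deg_path hn, deg_path hn, if_neg (by push_neg; exact ⟨hi0, hin⟩)]
          by_cases hjw : j = w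
          · rw [if_pos (by subst hjw; right; rfl), if_pos hjw]
            norm_num
          · have hjn : (j : ℕ) ≠ n - 1 := fun h => hjw (Fin.ext h)
            rw [if_neg (by push_neg; exact ⟨hj0, hjn⟩), if_neg hjw]
            simp [Real.zero_rpow hα0.ne']
        rw [Finset.sum_congr rfl hcongr, Finset.sum_ite_eq' (Ioi i) w,
          if_pos (Finset.mem_Ioi.mpr hiw)]
      · rw [if_neg hiw]
        have hIoi : Ioi i = ∅ := by
          ext j
          simp only [Finset.mem_Ioi, Finset.notMem_empty, iff_false, not_lt]
          have hj := j.isLt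
          have hiw' : ¬ ((i : ℕ) < (w : ℕ)) := fun h => hiw (Fin.lt_def.mpr h)
          rw [Fin.le_def]
          simp only [hw] at hiw' ⊢
          omega
        rw [hIoi, Finset.sum_empty]
  rw [Finset.sum_congr rfl (fun i _ => hterm i)]
  rw [← Finset.add_sum_erase _ _ (Finset.mem_univ z), if_pos rfl]
  have hrest : ∑ i ∈ univ.erase z, (if i = z then ((n : ℝ) - 2) else (if i < w then 1 else 0))
      = ((n - 2 : ℕ) : ℝ) := by
    rw [Finset.sum_congr rfl (fun i hi => if_neg (Finset.mem_erase.mp hi).1), Finset.sum_boole]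
    congr 1
    rw [Finset.filter_erase]
    have hfil : univ.filter (fun i => i < w) = Iio w := by
      ext j; simp
    rw [hfil]
    have hzmem : z ∈ Iio w := by
      rw [Finset.mem_Iio]
      exact lt_of_le_of_ne (by simp [hz, Fin.le_def]) hzw
    rw [Finset.card_erase_of_mem hzmem, Fin.card_Iio]
    simp only [hw]
    omega
  rw [hrest, Nat.cast_sub (by omega : 2 ≤ n)]
  push_cast; ring

lemma triangle_sum {n : ℕ} (f : Fin n → Fin n → ℝ) (hdiag : ∀ i, f i i = 0) :
    ∑ i : Fin n, ∑ j ∈ Ioi i, (f i j + f j i) = ∑ i : Fin n, ∑ j : Fin n, f i j := by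
  classical
  rw [Finset.sum_congr rfl (fun i _ => Finset.sum_add_distrib), Finset.sum_add_distrib]
  have h2 : ∑ i : Fin n, ∑ j ∈ Ioi i, f j i = ∑ i : Fin n, ∑ j ∈ Iio i, f i j :=
    Finset.sum_comm' (by intro x y; simp)
  rw [h2, ← Finset.sum_add_distrib]
  apply Finset.sum_congr rfl
  intro i _
  have hsplit : ∑ j ∈ Ioi i, f i j + ∑ j ∈ Iio i, f i j
      = ∑ j ∈ (Ioi i).disjUnion (Iio i) (Finset.disjoint_Ioi_Iio i), f i j :=
    (Finset.sum_disjUnion _).symm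
  rw [hsplit, Finset.Ioi_disjUnion_Iio]
  rw [Fintype.sum_eq_add_sum_compl i (f i), hdiag i, zero_add]

lemma tree_sigma_lb {n : ℕ} (hn : 4 ≤ n) (α : ℝ) (hα0 : 0 < α)
    (T : SimpleGraph (Fin n)) (hT : T.IsTree) (hns : ¬ Nonempty (T ≃g starGraph n)) :
    2 * (n : ℝ) - 4 ≤ sigmaT T α := by
  classical
  set D : Fin n → ℕ := fun v => T.degree v with hD
  have hdeg : ∀ v, deg T v = D v := fun v => deg_eq_degree T v
  -- every vertex has positive degree
  have hd1 : ∀ v, 1 ≤ D v := by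
    intro v
    have hcard : 1 < Fintype.card (Fin n) := by simp; omega
    obtain ⟨u, hu⟩ := Fintype.exists_ne_of_one_lt_card hcard v
    obtain ⟨p⟩ := hT.isConnected.preconnected v u
    have hnil : ¬ p.Nil := SimpleGraph.Walk.not_nil_of_ne (Ne.symm hu)
    have hadj := p.adj_snd hnil
    exact (SimpleGraph.degree_pos_iff_exists_adj T v).mpr ⟨_, hadj⟩
  -- sum of degrees
  have hsum : ∑ v : Fin n, D v = 2 * (n - 1) := by
    have h1 := T.sum_degrees_eq_twice_card_edges
    have h2 := hT.card_edgeFinset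
    simp only [Fintype.card_fin] at h2
    simp only [hD]
    omega
  set S1 : Finset (Fin n) := univ.filter (fun v => D v = 1) with hS1def
  set S2 : Finset (Fin n) := univ.filter (fun v => 2 ≤ D v) with hS2def
  have hcard : S1.card + S2.card = n := by
    have := Finset.card_filter_add_card_filter_not (s := univ)
      (p := fun v => D v = 1)
    rw [Finset.filter_congr (fun v _ => by
      constructor
      · intro h; have := hd1 v; simp at h ⊢; omega
      · intro h; omega : ∀ v ∈ univ, (¬ D v = 1 ↔ 2 ≤ D v))] at this
    simpa using this
  -- at least two vertices of degree ≥ 2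
  have hS2 : 2 ≤ S2.card := by
    by_contra hlt
    push_neg at hlt
    interval_cases h : S2.card
    · -- no vertex of degree ≥ 2: sum of degrees ≤ n
      have hle : ∀ v : Fin n, D v ≤ 1 := by
        intro v
        by_contra hv
        have : v ∈ S2 := by simp [hS2def]; omega
        rw [Finset.card_eq_zero.mp h] at this
        simp at this
      have : ∑ v : Fin n, D v ≤ ∑ _v : Fin n, 1 := Finset.sum_le_sum (fun v _ => hle v)
      simp at this
      omega
    · -- exactly one vertex c of degree ≥ 2
      obtain ⟨c, hc⟩ := Finset.card_eq_one.mp h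
      have hDc1 : ∀ v, v ≠ c → D v = 1 := by
        intro v hv
        have hnot : v ∉ S2 := by rw [hc]; simp [hv]
        simp [hS2def] at hnot
        have := hd1 v
        omega
      have hDc : D c = n - 1 := by
        have hsplit : ∑ v : Fin n, D v = D c + ∑ v ∈ univ.erase c, D v :=
          (Finset.add_sum_erase _ _ (Finset.mem_univ c)).symm
        have herase : ∑ v ∈ univ.erase c, D v = n - 1 := by
          rw [Finset.sum_congr rfl (fun v hv => hDc1 v (Finset.mem_erase.mp hv).1)]
          simp [Finset.card_erase_of_mem]
        omega
      -- c is adjacent to every other vertex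
      have hadjc : ∀ v, v ≠ c → T.Adj c v := by
        have hsub : T.neighborFinset c ⊆ univ.erase c := by
          intro u hu
          rw [SimpleGraph.mem_neighborFinset] at hu
          exact Finset.mem_erase.mpr ⟨(T.ne_of_adj hu).symm, Finset.mem_univ u⟩
        have hcards : (univ.erase c).card ≤ (T.neighborFinset c).card := by
          rw [Finset.card_erase_of_mem (Finset.mem_univ c), SimpleGraph.card_neighborFinset_eq_degree]
          have hdc : T.degree c = n - 1 := hDc
          simp only [Finset.card_univ, Fintype.card_fin]
          omega
        have heq := Finset.eq_of_subset_of_card_le hsub hcards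
        intro v hv
        have : v ∈ T.neighborFinset c := by
          rw [heq]
          exact Finset.mem_erase.mpr ⟨hv, Finset.mem_univ v⟩
        rwa [SimpleGraph.mem_neighborFinset] at this
      -- characterize adjacency
      have hadj_iff : ∀ u v, T.Adj u v ↔ (u ≠ v ∧ (u = c ∨ v = c)) := by
        intro u v
        constructor
        · intro huv
          refine ⟨T.ne_of_adj huv, ?_⟩
          by_contra hboth
          push_neg at hboth
          obtain ⟨huc, hvc⟩ := hboth
          have hpair : ({v, c} : Finset (Fin n)) ⊆ T.neighborFinset u := by
            intro x hx
            simp only [Finset.mem_insert, Finset.mem_singleton] at hx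
            rcases hx with rfl | rfl
            · rwa [SimpleGraph.mem_neighborFinset]
            · rw [SimpleGraph.mem_neighborFinset]
              exact (hadjc u huc).symm
          have h2le : 2 ≤ (T.neighborFinset u).card := by
            calc 2 = ({v, c} : Finset (Fin n)).card := by
                  rw [Finset.card_insert_of_notMem (by simp [hvc]), Finset.card_singleton]
              _ ≤ _ := Finset.card_le_card hpair
          rw [SimpleGraph.card_neighborFinset_eq_degree] at h2le
          have hD1 : T.degree u = 1 := hDc1 u huc
          omega
        · rintro ⟨huv, rfl | rfl⟩
          · exact hadjc v (Ne.symm huv)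
          · exact (hadjc u huv).symm
      -- build the isomorphism to the star, contradiction
      set z : Fin n := ⟨0, by omega⟩ with hz
      have hvz : ∀ u : Fin n, (u : ℕ) = 0 ↔ u = z := by
        intro u; rw [Fin.ext_iff]
      refine hns ⟨⟨Equiv.swap c z, ?_⟩⟩
      intro u v
      show (starGraph n).Adj (Equiv.swap c z u) (Equiv.swap c z v) ↔ T.Adj u v
      rw [hadj_iff]
      constructor
      · rintro ⟨hne, h0⟩
        refine ⟨fun hh => hne (by rw [hh]), ?_⟩
        rcases h0 with h0 | h0
        · left
          rw [hvz] at h0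
          have h0' := (Equiv.apply_eq_iff_eq_symm_apply _).mp h0
          rwa [Equiv.symm_swap, Equiv.swap_apply_right] at h0'
        · right
          rw [hvz] at h0
          have h0' := (Equiv.apply_eq_iff_eq_symm_apply _).mp h0
          rwa [Equiv.symm_swap, Equiv.swap_apply_right] at h0'
      · rintro ⟨hne, h0⟩
        refine ⟨fun hh => hne ((Equiv.swap c z).injective hh), ?_⟩
        rcases h0 with rfl | rfl
        · left; rw [hvz, Equiv.swap_apply_left]
        · right; rw [hvz, Equiv.swap_apply_left]
  have hS1 : 2 ≤ S1.card := by
    have hsplit : ∑ v ∈ S1, D v + ∑ v ∈ S2, D v = ∑ v : Fin n, D v := by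
      rw [hS1def, hS2def]
      rw [← Finset.sum_filter_add_sum_filter_not univ (fun v => D v = 1) D]
      congr 1
      apply Finset.sum_congr _ (fun _ _ => rfl)
      apply Finset.filter_congr
      intro v _
      have := hd1 v
      constructor
      · intro hh; omega
      · intro hh; omega
    have h1 : ∑ v ∈ S1, D v = S1.card := by
      rw [Finset.sum_congr rfl (fun v hv => by
        simp only [hS1def, Finset.mem_filter] at hv
        exact hv.2)]
      simp
    have h2 : 2 * S2.card ≤ ∑ v ∈ S2, D v := by
      calc 2 * S2.card = ∑ _v ∈ S2, 2 := by rw [Finset.sum_const]; ring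
        _ ≤ _ := Finset.sum_le_sum (fun v hv => by
            simp only [hS2def, Finset.mem_filter] at hv
            exact hv.2)
    omega
  -- now the counting bound
  set g : Fin n → Fin n → ℝ := fun i j =>
    (if D i = 1 then (1 : ℝ) else 0) * (if 2 ≤ D j then (1 : ℝ) else 0) with hg
  have hgdiag : ∀ i, g i i = 0 := by
    intro i
    simp only [hg]
    by_cases h : D i = 1
    · have h2 : ¬ 2 ≤ D i := by simp [h]
      rw [if_neg h2]; ring
    · rw [if_neg h]; ring
  have hpoint : ∀ i j : Fin n, g i j + g j i ≤
      |((deg T i : ℝ)) - (deg T j : ℝ)| ^ α := by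
    intro i j
    have habs : ∀ a b : ℕ, a = 1 → 2 ≤ b → (1 : ℝ) ≤ |((a : ℝ)) - (b : ℝ)| := by
      intro a b ha hb
      rw [abs_sub_comm]
      rw [le_abs]
      left
      have : (2 : ℝ) ≤ (b : ℝ) := by exact_mod_cast hb
      have : (a : ℝ) = 1 := by exact_mod_cast ha
      linarith [show (2:ℝ) ≤ (b:ℝ) from by exact_mod_cast hb]
    have hnn : (0 : ℝ) ≤ |((deg T i : ℝ)) - (deg T j : ℝ)| ^ α :=
      Real.rpow_nonneg (abs_nonneg _) α
    by_cases h1 : D i = 1 ∧ 2 ≤ D j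
    · have hg1 : g i j = 1 := by simp [hg, h1.1, h1.2]
      have hg2 : g j i = 0 := by
        simp only [hg]
        rw [if_neg (by omega : ¬ D j = 1)]
        ring
      rw [hg1, hg2, add_zero]
      rw [hdeg, hdeg]
      exact Real.one_le_rpow (habs _ _ h1.1 h1.2) hα0.le
    · by_cases h2 : D j = 1 ∧ 2 ≤ D i
      · have hg1 : g i j = 0 := by
          simp only [hg]
          rw [if_neg (by omega : ¬ D i = 1)]
          ring
        have hg2 : g j i = 1 := by simp [hg, h2.1, h2.2]
        rw [hg1, hg2, zero_add, hdeg, hdeg, abs_sub_comm]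
        exact Real.one_le_rpow (habs _ _ h2.1 h2.2) hα0.le
      · have hg1 : g i j = 0 := by
          simp only [hg]
          rcases not_and_or.mp h1 with h | h
          · rw [if_neg h]; ring
          · rw [if_neg h]; ring
        have hg2 : g j i = 0 := by
          simp only [hg]
          rcases not_and_or.mp h2 with h | h
          · rw [if_neg h]; ring
          · rw [if_neg h]; ring
        rw [hg1, hg2, add_zero]
        exact hnn
  have hlb : ((S1.card : ℝ)) * (S2.card : ℝ) ≤ sigmaT T α := by
    have step1 : ∑ i : Fin n, ∑ j ∈ Ioi i, (g i j + g j i) ≤ sigmaT T α := by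
      unfold sigmaT
      apply Finset.sum_le_sum
      intro i _
      apply Finset.sum_le_sum
      intro j _
      exact hpoint i j
    have step2 : ∑ i : Fin n, ∑ j ∈ Ioi i, (g i j + g j i)
        = ((S1.card : ℝ)) * (S2.card : ℝ) := by
      rw [triangle_sum g hgdiag]
      have : ∑ i : Fin n, ∑ j : Fin n, g i j =
          (∑ i : Fin n, if D i = 1 then (1 : ℝ) else 0) *
          (∑ j : Fin n, if 2 ≤ D j then (1 : ℝ) else 0) := by
        rw [Finset.sum_mul_sum]
      rw [this, Finset.sum_boole, Finset.sum_boole]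
    linarith
  have hprod : 2 * n - 4 ≤ S1.card * S2.card := by
    obtain ⟨a, ha⟩ := Nat.exists_eq_add_of_le hS1
    obtain ⟨b, hb⟩ := Nat.exists_eq_add_of_le hS2
    rw [ha, hb] at hcard
    rw [ha, hb]
    calc 2 * n - 4 ≤ 4 + 2 * a + 2 * b := by omega
      _ ≤ 4 + 2 * a + 2 * b + a * b := Nat.le_add_right _ _
      _ = (2 + a) * (2 + b) := by ring
  calc 2 * (n : ℝ) - 4 ≤ ((S1.card * S2.card : ℕ) : ℝ) := by
        have h4 : ((2 * n - 4 : ℕ) : ℝ) = 2 * (n : ℝ) - 4 := by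
          rw [Nat.cast_sub (by omega : 4 ≤ 2 * n)]
          push_cast; ring
        rw [← h4]
        exact_mod_cast hprod
    _ = ((S1.card : ℝ)) * (S2.card : ℝ) := by push_cast; ring
    _ ≤ sigmaT T α := hlb

/-- Let `n ≥ 4` and `0 < α < log_{n−2}((2n−4)/(n−1))`. Among all trees on `n`
vertices, the star `S_n` is the unique (up to isomorphism) minimizer of
`σ_t^α`, and the path `P_n` attains the second smallest value of `σ_t^α`. -/
theorem stmt_14 (n : ℕ) (hn : 4 ≤ n) (α : ℝ) (hα0 : 0 < α)
    (hα : α < Real.logb ((n : ℝ) - 2) ((2 * (n : ℝ) - 4) / ((n : ℝ) - 1))) :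
    (∀ T : SimpleGraph (Fin n), T.IsTree →
        ¬ Nonempty (T ≃g starGraph n) → sigmaT (starGraph n) α < sigmaT T α) ∧
    (∀ T : SimpleGraph (Fin n), T.IsTree →
        ¬ Nonempty (T ≃g starGraph n) →
          sigmaT (SimpleGraph.pathGraph n) α ≤ sigmaT T α) := by
  have hn' : (4 : ℝ) ≤ (n : ℝ) := by exact_mod_cast hn
  have hb : (1 : ℝ) < (n : ℝ) - 2 := by linarith
  have hx : (0 : ℝ) < (2 * (n : ℝ) - 4) / ((n : ℝ) - 1) := by
    apply div_pos <;> linarith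
  have hkey : ((n : ℝ) - 2) ^ α < (2 * (n : ℝ) - 4) / ((n : ℝ) - 1) := by
    have := (Real.rpow_lt_rpow_left_iff hb).mpr hα
    rwa [Real.rpow_logb (by linarith) (by linarith) hx] at this
  have hstar : sigmaT (starGraph n) α < 2 * (n : ℝ) - 4 := by
    rw [sigma_star hn α hα0]
    have h1 : (0 : ℝ) < (n : ℝ) - 1 := by linarith
    calc ((n : ℝ) - 1) * ((n : ℝ) - 2) ^ α
        < ((n : ℝ) - 1) * ((2 * (n : ℝ) - 4) / ((n : ℝ) - 1)) := by
          exact mul_lt_mul_of_pos_left hkey h1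
      _ = 2 * (n : ℝ) - 4 := by field_simp
  constructor
  · intro T hT hns
    exact lt_of_lt_of_le hstar (tree_sigma_lb hn α hα0 T hT hns)
  · intro T hT hns
    rw [sigma_path hn α hα0]
    exact tree_sigma_lb hn α hα0 T hT hns
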